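/- Let U ⊆ F^n have trivial hull with generator matrix G (k×n) and parity check matrix H ((n−k)×n). Then the block matrix M with first k rows G and last n−k rows H is invertible, and its inverse is the n×n matrix [Gᵀ(G·Gᵀ)⁻¹ | Hᵀ(H·Hᵀ)⁻¹] (horizontal concatenation of the two blocks). -/

import Mathlib

open Matrix

/-- The orthogonal complement (dual code) of a linear code `U ⊆ F^n` with respect to the
standard bilinear form `⟨x, y⟩ = ∑ i, x i * y i`. -/
def dualCode {F : Type*} [Field F] {n : ℕ} (U : Submodule F (Fin n → F)) :
    Submodule F (Fin n → F) where
  carrier := {z | ∀ u ∈ U, ∑ i, u i * z i = 0}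
  add_mem' := by
    intro a b ha hb u hu
    have h1 := ha u hu
    have h2 := hb u hu
    simp only [Set.mem_setOf_eq] at *
    calc ∑ i, u i * (a + b) i = (∑ i, u i * a i) + ∑ i, u i * b i := by
          rw [← Finset.sum_add_distrib]
          exact Finset.sum_congr rfl fun i _ => by simp [mul_add]
      _ = 0 := by rw [h1, h2, add_zero]
  zero_mem' := by
    intro u hu
    simp
  smul_mem' := by
    intro c a ha u hu
    have h := ha u hu
    simp only [Set.mem_setOf_eq] at *
    calc ∑ i, u i * (c • a) i = c * ∑ i, u i * a i := by
          rw [Finset.mul_sum]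
          exact Finset.sum_congr rfl fun i _ => by simp [smul_eq_mul]; ring
      _ = 0 := by rw [h, mul_zero]


section Aux

variable {F : Type*} [Field F] {n : ℕ}

lemma dot_mem_span_eq_zero {v : Fin n → F} {s : Set (Fin n → F)}
    (h : ∀ w ∈ s, w ⬝ᵥ v = 0) {u : Fin n → F} (hu : u ∈ Submodule.span F s) :
    u ⬝ᵥ v = 0 := by
  induction hu using Submodule.span_induction with
  | mem x hx => exact h x hx
  | zero => simp
  | add x y hx hy px py => simp [add_dotProduct, px, py]
  | smul a x hx px => simp [smul_dotProduct, px]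

end Aux

/-- Let `U ⊆ F^n` have trivial hull with generator matrix `G` (`k × n`)
and parity check matrix `H` (`l × n`, `k + l = n`). Then the block matrix `M` stacking `G`
over `H` is invertible, with inverse the horizontal concatenation
`[Gᵀ (G Gᵀ)⁻¹ | Hᵀ (H Hᵀ)⁻¹]`. -/
theorem statement18 {F : Type*} [Field F] {n k l : ℕ} (hn : k + l = n)
    (U : Submodule F (Fin n → F))
    (G : Matrix (Fin k) (Fin n) F) (H : Matrix (Fin l) (Fin n) F)
    (hGind : LinearIndependent F G)
    (hGspan : Submodule.span F (Set.range G) = U)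
    (hHind : LinearIndependent F H)
    (hHspan : Submodule.span F (Set.range H) = dualCode U)
    (hhull : U ⊓ dualCode U = ⊥) :
    Matrix.fromRows G H *
        Matrix.fromCols (Gᵀ * (G * Gᵀ)⁻¹) (Hᵀ * (H * Hᵀ)⁻¹) = 1 ∧
    Matrix.fromCols (Gᵀ * (G * Gᵀ)⁻¹) (Hᵀ * (H * Hᵀ)⁻¹) *
        Matrix.fromRows G H = 1 := by
  -- G and H rows are orthogonal
  have hGH : G * Hᵀ = 0 := by
    ext i j
    have hHj : H j ∈ dualCode U := hHspan ▸ Submodule.subset_span ⟨j, rfl⟩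
    have hGi : G i ∈ U := hGspan ▸ Submodule.subset_span ⟨i, rfl⟩
    simpa [mul_apply, transpose_apply] using hHj (G i) hGi
  have hHG : H * Gᵀ = 0 := by
    have := congrArg transpose hGH
    simpa [transpose_mul] using this
  -- the sup is everything
  have hdimU : Module.finrank F U = k := by
    rw [← hGspan, finrank_span_eq_card hGind]; simp
  have hdimD : Module.finrank F (dualCode U) = l := by
    rw [← hHspan, finrank_span_eq_card hHind]; simp
  have hsup : U ⊔ dualCode U = ⊤ := by
    apply Submodule.eq_top_of_finrank_eq
    have := Submodule.finrank_sup_add_finrank_inf_eq U (dualCode U)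
    rw [hhull, hdimU, hdimD] at this
    simp only [finrank_bot, add_zero] at this
    rw [this, hn, Module.finrank_pi]
    simp
  -- key injectivity
  have key : ∀ v : Fin n → F, G *ᵥ v = 0 → H *ᵥ v = 0 → v = 0 := by
    intro v hGv hHv
    have hall : ∀ u : Fin n → F, u ⬝ᵥ v = 0 := by
      intro u
      have hu : u ∈ Submodule.span F (Set.range G ∪ Set.range H) := by
        rw [Submodule.span_union, hGspan, hHspan, hsup]; trivial
      refine dot_mem_span_eq_zero ?_ hu
      rintro w (⟨i, rfl⟩ | ⟨i, rfl⟩)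
      · exact congrFun hGv i
      · exact congrFun hHv i
    funext j
    simpa [single_dotProduct] using hall (Pi.single j 1)
  -- G * Gᵀ invertible
  have hGG : IsUnit (G * Gᵀ).det := by
    rw [isUnit_iff_ne_zero]
    intro hdet
    obtain ⟨x, hx, hx0⟩ := (Matrix.exists_mulVec_eq_zero_iff).2 hdet
    have h1 : G *ᵥ (Gᵀ *ᵥ x) = 0 := by rw [mulVec_mulVec]; exact hx0
    have h2 : H *ᵥ (Gᵀ *ᵥ x) = 0 := by rw [mulVec_mulVec, hHG, zero_mulVec]
    have h3 : Gᵀ *ᵥ x = 0 := key _ h1 h2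
    apply hx
    have : ∑ i, x i • G i = 0 := by
      funext j
      have := congrFun h3 j
      simpa [mulVec, dotProduct, transpose_apply, Finset.sum_apply, mul_comm] using this
    exact Fintype.linearIndependent_iff.1 hGind x (by simpa using this) |> funext
  have hHH : IsUnit (H * Hᵀ).det := by
    rw [isUnit_iff_ne_zero]
    intro hdet
    obtain ⟨x, hx, hx0⟩ := (Matrix.exists_mulVec_eq_zero_iff).2 hdet
    have h1 : H *ᵥ (Hᵀ *ᵥ x) = 0 := by rw [mulVec_mulVec]; exact hx0
    have h2 : G *ᵥ (Hᵀ *ᵥ x) = 0 := by rw [mulVec_mulVec, hGH, zero_mulVec]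
    have h3 : Hᵀ *ᵥ x = 0 := key _ h2 h1
    apply hx
    have : ∑ i, x i • H i = 0 := by
      funext j
      have := congrFun h3 j
      simpa [mulVec, dotProduct, transpose_apply, Finset.sum_apply, mul_comm] using this
    exact Fintype.linearIndependent_iff.1 hHind x (by simpa using this) |> funext
  have hmain : Matrix.fromRows G H *
      Matrix.fromCols (Gᵀ * (G * Gᵀ)⁻¹) (Hᵀ * (H * Hᵀ)⁻¹) = 1 := by
    rw [fromRows_mul_fromCols]
    rw [← Matrix.mul_assoc, ← Matrix.mul_assoc, ← Matrix.mul_assoc, ← Matrix.mul_assoc]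
    rw [Matrix.mul_nonsing_inv _ hGG, Matrix.mul_nonsing_inv _ hHH, hGH, hHG]
    simp [Matrix.fromBlocks_one]
  refine ⟨hmain, ?_⟩
  exact (Matrix.mul_eq_one_comm_of_equiv ((finSumFinEquiv.trans (finCongr hn)).symm)).2 hmain
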